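/- If A ⊣ B via a bounded intertwining operator T such that T⁻¹ is everywhere defined and bounded, and T(D(A)) is a core for B, then σ_p(B) ⊆ σ(A). -/

import Mathlib

open scoped InnerProductSpace

variable {H : Type*} [NormedAddCommGroup H] [InnerProductSpace ℂ H]

/-- The point spectrum (set of eigenvalues) of a partially defined operator. -/
def pointSpectrum (A : H →ₗ.[ℂ] H) : Set ℂ :=
  {l | ∃ ξ : A.domain, (ξ : H) ≠ 0 ∧ A ξ = l • (ξ : H)}

/-- The resolvent set of a partially defined operator. -/
def resSet (A : H →ₗ.[ℂ] H) : Set ℂ :=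
  {l | ∃ R : H →L[ℂ] H,
    (∀ η : H, ∃ h : R η ∈ A.domain, A ⟨R η, h⟩ - l • R η = η) ∧
    (∀ ξ : A.domain, R (A ξ - l • (ξ : H)) = (ξ : H))}

/-- If `A ⊣ B` via a bounded intertwining operator `T` whose inverse is everywhere
defined and bounded, and `T(D(A))` is a core for `B` (dense in `D(B)` for the graph
norm), then `σ_p(B) ⊆ σ(A)`. -/
theorem pointSpectrum_subset_spectrum {H K : Type*}
    [NormedAddCommGroup H] [InnerProductSpace ℂ H] [CompleteSpace H]
    [NormedAddCommGroup K] [InnerProductSpace ℂ K] [CompleteSpace K]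
    (A : H →ₗ.[ℂ] H) (B : K →ₗ.[ℂ] K)
    (hAdense : Dense (A.domain : Set H)) (hBdense : Dense (B.domain : Set K))
    (hAclosed : A.IsClosed) (hBclosed : B.IsClosed)
    (T : H →L[ℂ] K) (Tinv : K →L[ℂ] H)
    (hleft : ∀ ξ : H, Tinv (T ξ) = ξ) (hright : ∀ η : K, T (Tinv η) = η)
    (hmap : ∀ ξ : A.domain, T (ξ : H) ∈ B.domain)
    (hint : ∀ ξ : A.domain, B ⟨T (ξ : H), hmap ξ⟩ = T (A ξ))
    (hcore : ∀ (η : B.domain) (ε : ℝ), 0 < ε → ∃ ξ : A.domain,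
      ‖T (ξ : H) - (η : K)‖ < ε ∧ ‖B ⟨T (ξ : H), hmap ξ⟩ - B η‖ < ε) :
    pointSpectrum B ⊆ (resSet A)ᶜ := by
  rintro l ⟨η, hη0, hηeig⟩ ⟨R, hR1, hR2⟩
  set C : ℝ := 1 + ‖T‖ * (‖R‖ * (‖Tinv‖ * (1 + ‖l‖))) with hCdef
  have hCpos : 0 < C := by positivity
  have hnpos : 0 < ‖(η : K)‖ := norm_pos_iff.mpr hη0
  have hεpos : 0 < ‖(η : K)‖ / (2 * C) := by positivity
  obtain ⟨ξ, h1, h2⟩ := hcore η _ hεpos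
  set ε := ‖(η : K)‖ / (2 * C) with hεdef
  have key : A ξ - l • (ξ : H) = Tinv (B ⟨T (ξ : H), hmap ξ⟩ - l • T (ξ : H)) := by
    rw [map_sub, map_smul, hint, hleft, hleft]
  have hB : ‖B ⟨T (ξ : H), hmap ξ⟩ - l • T (ξ : H)‖ ≤ ε + ‖l‖ * ε := by
    have hdecomp : B ⟨T (ξ : H), hmap ξ⟩ - l • T (ξ : H)
        = (B ⟨T (ξ : H), hmap ξ⟩ - B η) - l • (T (ξ : H) - (η : K)) := by
      rw [hηeig]; module
    rw [hdecomp]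
    calc ‖(B ⟨T (ξ : H), hmap ξ⟩ - B η) - l • (T (ξ : H) - (η : K))‖
        ≤ ‖B ⟨T (ξ : H), hmap ξ⟩ - B η‖ + ‖l • (T (ξ : H) - (η : K))‖ :=
          norm_sub_le _ _
      _ ≤ ε + ‖l‖ * ε := by
          rw [norm_smul]
          exact add_le_add h2.le (by
            exact mul_le_mul_of_nonneg_left h1.le (norm_nonneg _))
  have hξbound : ‖(ξ : H)‖ ≤ ‖R‖ * (‖Tinv‖ * ((1 + ‖l‖) * ε)) := by
    calc ‖(ξ : H)‖ = ‖R (A ξ - l • (ξ : H))‖ := by rw [hR2 ξ]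
      _ ≤ ‖R‖ * ‖A ξ - l • (ξ : H)‖ := R.le_opNorm _
      _ ≤ ‖R‖ * (‖Tinv‖ * ((1 + ‖l‖) * ε)) := by
          refine mul_le_mul_of_nonneg_left ?_ (norm_nonneg _)
          rw [key]
          calc ‖Tinv (B ⟨T (ξ : H), hmap ξ⟩ - l • T (ξ : H))‖
              ≤ ‖Tinv‖ * ‖B ⟨T (ξ : H), hmap ξ⟩ - l • T (ξ : H)‖ :=
                Tinv.le_opNorm _
            _ ≤ ‖Tinv‖ * ((1 + ‖l‖) * ε) := by
                refine mul_le_mul_of_nonneg_left ?_ (norm_nonneg _)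
                nlinarith [hB]
  have hηbound : ‖(η : K)‖ ≤ C * ε := by
    calc ‖(η : K)‖ = ‖((η : K) - T (ξ : H)) + T (ξ : H)‖ := by rw [sub_add_cancel]
      _ ≤ ‖(η : K) - T (ξ : H)‖ + ‖T (ξ : H)‖ := norm_add_le _ _
      _ ≤ ε + ‖T‖ * ‖(ξ : H)‖ := by
          refine add_le_add ?_ (T.le_opNorm _)
          rw [norm_sub_rev]; exact h1.le
      _ ≤ ε + ‖T‖ * (‖R‖ * (‖Tinv‖ * ((1 + ‖l‖) * ε))) := by
          refine add_le_add (le_refl _) ?_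
          exact mul_le_mul_of_nonneg_left hξbound (norm_nonneg _)
      _ = C * ε := by rw [hCdef]; ring
  have : C * ε = ‖(η : K)‖ / 2 := by
    rw [hεdef]; field_simp
  rw [this] at hηbound
  linarith
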